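/- Let A be a real n×n matrix, B a real n×m matrix, K a real m×n matrix, P and Q symmetric real n×n matrices, and R a symmetric real m×m matrix. Suppose the Kalman constraint equations Q + Aᵀ P (A + B K) − P = 0 and R K + Bᵀ P (A + B K) = 0 hold, P is positive definite, and Q + Kᵀ R K is positive definite. Then every complex eigenvalue λ of the closed-loop matrix A + B K satisfies |λ| < 1; in particular, any gain matrix K satisfying a Kalman constraint with P ≻ 0 and Q + Kᵀ R K ≻ 0 stabilizes the system. -/

import Mathlib

open Matrix


private lemma re_dot_map_pos {n : ℕ} {M : Matrix (Fin n) (Fin n) ℝ} (hM : M.PosDef)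
    {v : Fin n → ℂ} (hv : v ≠ 0) :
    0 < (dotProduct (star v) ((M.map (fun x : ℝ => (x:ℂ))) *ᵥ v)).re := by
  have key : (dotProduct (star v) ((M.map (fun x : ℝ => (x:ℂ))) *ᵥ v)).re
      = dotProduct (fun i => (v i).re) (M *ᵥ fun i => (v i).re)
        + dotProduct (fun i => (v i).im) (M *ᵥ fun i => (v i).im) := by
    simp only [dotProduct, mulVec, dotProduct, Matrix.map_apply, Pi.star_apply,
      Finset.mul_sum, Finset.sum_mul, ← Finset.sum_add_distrib, Complex.re_sum]
    refine Finset.sum_congr rfl fun i _ => Finset.sum_congr rfl fun j _ => ?_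
    simp [Complex.mul_re, Complex.mul_im]
  rw [key]
  have hre : ∀ x : Fin n → ℝ, 0 ≤ dotProduct x (M *ᵥ x) := fun x => by
    simpa using hM.posSemidef.dotProduct_mulVec_nonneg x
  have hpos : ∀ x : Fin n → ℝ, x ≠ 0 → 0 < dotProduct x (M *ᵥ x) := fun x hx => by
    simpa using hM.dotProduct_mulVec_pos hx
  by_cases hx : (fun i => (v i).re) = 0
  · have hy : (fun i => (v i).im) ≠ 0 := by
      intro hy
      exact hv (funext fun i => Complex.ext (congrFun hx i) (congrFun hy i))
    have := hpos _ hy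
    have := hre (fun i => (v i).re)
    linarith
  · have := hpos _ hx
    have := hre (fun i => (v i).im)
    linarith


/-- Any gain matrix `K` satisfying a Kalman constraint with `P ≻ 0` and
`Q + Kᵀ R K ≻ 0` stabilizes the system: every complex eigenvalue of the
closed-loop matrix `A + B K` has modulus less than one. -/
theorem kalman_constraint_stabilizes {n m : ℕ} (hn : 0 < n) (hm : 0 < m)
    (A P Q : Matrix (Fin n) (Fin n) ℝ) (B : Matrix (Fin n) (Fin m) ℝ)
    (K : Matrix (Fin m) (Fin n) ℝ) (R : Matrix (Fin m) (Fin m) ℝ)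
    (hP : P.IsSymm) (hQ : Q.IsSymm) (hR : R.IsSymm)
    (h1 : Q + Aᵀ * P * (A + B * K) - P = 0)
    (h2 : R * K + Bᵀ * P * (A + B * K) = 0)
    (hPpd : P.PosDef) (hQKRK : (Q + Kᵀ * R * K).PosDef) :
    ∀ (lam : ℂ) (v : Fin n → ℂ), v ≠ 0 →
      ((A + B * K).map (fun x : ℝ => (x : ℂ))).mulVec v = lam • v →
        ‖lam‖ < 1 := by
  intro lam v hv heig
  set T : Matrix (Fin n) (Fin n) ℝ := A + B * K with hT
  set S : Matrix (Fin n) (Fin n) ℝ := Q + Kᵀ * R * K with hS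
  -- real Lyapunov identity
  have e1 : Aᵀ * P * T = P - Q := by
    rw [sub_eq_zero] at h1
    exact eq_sub_of_add_eq' h1
  have e2 : Bᵀ * P * T = -(R * K) := eq_neg_of_add_eq_zero_right h2
  have lyap : Tᵀ * P * T + S = P := by
    have expand : Tᵀ * P * T = Aᵀ * P * T + Kᵀ * (Bᵀ * P * T) := by
      rw [hT, transpose_add, transpose_mul, Matrix.add_mul, Matrix.add_mul,
        Matrix.mul_assoc Kᵀ Bᵀ P, Matrix.mul_assoc Kᵀ (Bᵀ * P) _]
    rw [expand, e1, e2, hS, Matrix.mul_neg, ← Matrix.mul_assoc]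
    abel
  -- map to ℂ
  set f : ℝ →+* ℂ := Complex.ofRealHom with hf
  set Pc := P.map (fun x : ℝ => (x:ℂ)) with hPc
  set Tc := T.map (fun x : ℝ => (x:ℂ)) with hTc
  set Sc := S.map (fun x : ℝ => (x:ℂ)) with hSc
  have lyapC : Tcᴴ * Pc * Tc + Sc = Pc := by
    have hmap : (Tᵀ * P * T + S).map ⇑f = P.map ⇑f :=
      congrArg (fun M : Matrix (Fin n) (Fin n) ℝ => M.map ⇑f) lyap
    have hTt : Tᵀ.map (fun x : ℝ => (x:ℂ)) = Tcᴴ := by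
      ext i j
      simp [hTc, conjTranspose_apply, Matrix.map_apply, Complex.conj_ofReal]
    rw [Matrix.map_add ⇑f f.map_add, Matrix.map_mul, Matrix.map_mul] at hmap
    have hTt' : Tᵀ.map ⇑f = Tcᴴ := hTt
    rw [hTt'] at hmap
    exact hmap
  -- scalar consequence
  have hstep : dotProduct (star v) ((Tcᴴ * Pc * Tc) *ᵥ v)
      = lam * (starRingEnd ℂ lam) * dotProduct (star v) (Pc *ᵥ v) := by
    have h2' : (Tcᴴ * Pc * Tc) *ᵥ v = Tcᴴ *ᵥ (Pc *ᵥ (Tc *ᵥ v)) := by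
      rw [← mulVec_mulVec, ← mulVec_mulVec]
    rw [h2', heig, mulVec_smul, dotProduct_mulVec, ← star_mulVec, heig, star_smul]
    simp [dotProduct_smul, smul_dotProduct, smul_eq_mul]
    ring

  have main : dotProduct (star v) ((Tcᴴ * Pc * Tc + Sc) *ᵥ v) = dotProduct (star v) (Pc *ᵥ v) :=
    congrArg (fun M : Matrix (Fin n) (Fin n) ℂ => dotProduct (star v) (M *ᵥ v)) lyapC
  simp only [add_mulVec, dotProduct_add] at main
  rw [hstep] at main
  -- real parts
  have hpa : 0 < (dotProduct (star v) (Pc *ᵥ v)).re := re_dot_map_pos hPpd hv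
  have hps : 0 < (dotProduct (star v) (Sc *ᵥ v)).re := re_dot_map_pos hQKRK hv
  have hlam : lam * (starRingEnd ℂ) lam = ((‖lam‖ ^ 2 : ℝ) : ℂ) := by
    rw [Complex.mul_conj, Complex.normSq_eq_norm_sq]
  rw [hlam] at main
  have hmre := congrArg Complex.re main
  simp only [Complex.add_re, Complex.re_ofReal_mul] at hmre
  have hsq : ‖lam‖ ^ 2 < 1 := by
    nlinarith [hmre, hpa, hps]
  nlinarith [norm_nonneg lam, hsq]
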